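/- Let k be a field, n a natural number, V = k^n, and U_1 ⊊ U_2 subspaces of V. Let m be the largest element of I(U_2) \ I(U_1) (this set is nonempty). Then there exists a unique subspace W with U_1 ⊆ W ⊆ U_2 and I(W) = I(U_1) ∪ {m}. -/
import Mathlib


/-- The subspace of row vectors in `k^n` whose first `i` coordinates
(the coordinates of index `< i`, i.e. the coordinates numbered `1, …, i` in
one-based numbering) vanish. -/
def lowCoordsZero (k : Type*) [Field k] (n : ℕ) (i : ℕ) : Submodule k (Fin n → k) where
  carrier := {v | ∀ j : Fin n, (j : ℕ) < i → v j = 0}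
  add_mem' := by
    intro a b ha hb j hj
    simp [Pi.add_apply, ha j hj, hb j hj]
  zero_mem' := fun j _ => rfl
  smul_mem' := by
    intro c a ha j hj
    simp [Pi.smul_apply, ha j hj]

/-- The pivot set of a subspace `U ⊆ k^n`: coordinate `i` is a pivot when intersecting
`U` with the subspace of vectors vanishing in coordinates `≤ i` is a proper cut compared
with vanishing in coordinates `< i`.  This is the set of pivot columns of the reduced
row echelon form of any matrix whose rows generate `U`. -/
def pivotSet {k : Type*} [Field k] {n : ℕ} (U : Submodule k (Fin n → k)) : Set (Fin n) :=
  {i : Fin n | U ⊓ lowCoordsZero k n i ≠ U ⊓ lowCoordsZero k n ((i : ℕ) + 1)}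

lemma mem_lowCoordsZero {k : Type*} [Field k] {n i : ℕ} {v : Fin n → k} :
    v ∈ lowCoordsZero k n i ↔ ∀ j : Fin n, (j : ℕ) < i → v j = 0 := Iff.rfl

lemma mem_pivotSet_iff {k : Type*} [Field k] {n : ℕ} (U : Submodule k (Fin n → k)) (i : Fin n) :
    i ∈ pivotSet U ↔ ∃ v ∈ U, (∀ j : Fin n, (j : ℕ) < (i : ℕ) → v j = 0) ∧ v i ≠ 0 := by
  constructor
  · intro h
    by_contra hc
    push_neg at hc
    apply h
    apply le_antisymm
    · intro v hv
      rw [Submodule.mem_inf] at hv ⊢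
      refine ⟨hv.1, fun j hj => ?_⟩
      rcases Nat.lt_succ_iff_lt_or_eq.mp hj with h' | h'
      · exact hv.2 j h'
      · have hji : j = i := Fin.ext h'
        subst hji
        exact hc v hv.1 hv.2
    · intro v hv
      rw [Submodule.mem_inf] at hv ⊢
      exact ⟨hv.1, fun j hj => hv.2 j (Nat.lt_succ_of_lt hj)⟩
  · rintro ⟨v, hvU, hv0, hvi⟩ heq
    have hmem : v ∈ U ⊓ lowCoordsZero k n ((i : ℕ) + 1) := by
      rw [← heq, Submodule.mem_inf]
      exact ⟨hvU, hv0⟩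
    exact hvi ((Submodule.mem_inf.mp hmem).2 i (Nat.lt_succ_self _))

lemma pivotSet_mono {k : Type*} [Field k] {n : ℕ} {A B : Submodule k (Fin n → k)}
    (hle : A ≤ B) : pivotSet A ⊆ pivotSet B := by
  intro i hi
  rw [mem_pivotSet_iff] at hi ⊢
  obtain ⟨v, hv, h0, hvi⟩ := hi
  exact ⟨v, hle hv, h0, hvi⟩

lemma pivot_sandwich {k : Type*} [Field k] {n : ℕ} {A B : Submodule k (Fin n → k)}
    (hle : A ≤ B) (hI : pivotSet B ⊆ pivotSet A) : A = B := by
  have key : ∀ d : ℕ, ∀ v ∈ B, (∀ j : Fin n, (j : ℕ) < n - d → v j = 0) → v ∈ A := by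
    intro d
    induction d with
    | zero =>
      intro v hv h0
      have hv0 : v = 0 := funext fun j => h0 j (by have := j.isLt; omega)
      simp [hv0]
    | succ d ih =>
      intro v hv h0
      by_cases hdn : n ≤ d
      · exact ih v hv fun j hj => h0 j (by omega)
      · set i : Fin n := ⟨n - (d + 1), by omega⟩ with hi
        have hival : (i : ℕ) = n - (d + 1) := rfl
        by_cases hvi : v i = 0
        · refine ih v hv fun j hj => ?_
          rcases Nat.lt_or_ge (j : ℕ) (n - (d + 1)) with h' | h'
          · exact h0 j h'
          · have hji : j = i := Fin.ext (by rw [hival]; omega)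
            rw [hji]; exact hvi
        · have hpiv : i ∈ pivotSet B :=
            (mem_pivotSet_iff B i).mpr ⟨v, hv, fun j hj => h0 j (by omega), hvi⟩
          obtain ⟨a, haA, ha0, hai⟩ := (mem_pivotSet_iff A i).mp (hI hpiv)
          have hwB : v - (v i / a i) • a ∈ B := B.sub_mem hv (B.smul_mem _ (hle haA))
          have hw0 : ∀ j : Fin n, (j : ℕ) < n - d → (v - (v i / a i) • a) j = 0 := by
            intro j hj
            rcases Nat.lt_or_ge (j : ℕ) (n - (d + 1)) with h' | h'
            · simp [h0 j h', ha0 j (by omega)]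
            · have hji : j = i := Fin.ext (by rw [hival]; omega)
              subst hji
              simp [div_mul_cancel₀ _ hai]
          have hwA : v - (v i / a i) • a ∈ A := ih _ hwB hw0
          have : v = (v - (v i / a i) • a) + (v i / a i) • a := by abel
          rw [this]
          exact A.add_mem hwA (A.smul_mem _ haA)
  refine le_antisymm hle fun v hv => key n v hv fun j hj => absurd hj (by omega)

/-- If `U₁ ⊊ U₂` and `m` is the largest pivot of `U₂` that is not a pivot of `U₁`, then
there is a unique intermediate subspace `W` with `I(W) = I(U₁) ∪ {m}`. -/
theorem existsUnique_intermediate_pivotSet_insert_max (k : Type*) [Field k] (n : ℕ)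
    (U₁ U₂ : Submodule k (Fin n → k)) (h : U₁ < U₂) (m : Fin n)
    (hm : m ∈ pivotSet U₂ \ pivotSet U₁)
    (hmax : ∀ i ∈ pivotSet U₂ \ pivotSet U₁, i ≤ m) :
    ∃! W : Submodule k (Fin n → k),
      U₁ ≤ W ∧ W ≤ U₂ ∧ pivotSet W = pivotSet U₁ ∪ {m} := by
  set C : Submodule k (Fin n → k) := U₁ ⊔ (U₂ ⊓ lowCoordsZero k n m) with hC
  have hC1 : U₁ ≤ C := le_sup_left
  have hC2 : C ≤ U₂ := sup_le h.le inf_le_left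
  -- a witness vector for the pivot m of U₂
  obtain ⟨v, hvU₂, hv0, hvm⟩ := (mem_pivotSet_iff U₂ m).mp hm.1
  have hvC : v ∈ C := Submodule.mem_sup_right (Submodule.mem_inf.mpr ⟨hvU₂, hv0⟩)
  have hCpiv : pivotSet C = pivotSet U₁ ∪ {m} := by
    apply Set.Subset.antisymm
    · intro i hi
      obtain ⟨x, hxC, hx0, hxi⟩ := (mem_pivotSet_iff C i).mp hi
      rcases lt_trichotomy i m with him | him | him
      · left
        obtain ⟨u, huU, w, hwU, hx⟩ := Submodule.mem_sup.mp hxC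
        have hw0 := (Submodule.mem_inf.mp hwU).2
        refine (mem_pivotSet_iff U₁ i).mpr ⟨u, huU, fun j hj => ?_, ?_⟩
        · have h1 : x j = 0 := hx0 j hj
          have h2 : w j = 0 := hw0 j (by
            have : (i : ℕ) < (m : ℕ) := him
            omega)
          have h4 := congrFun hx j
          simp only [Pi.add_apply] at h4
          have h3 : u j = x j - w j := by rw [← h4]; ring
          rw [h3, h1, h2, sub_zero]
        · have h2 : w i = 0 := hw0 i him
          have h4 := congrFun hx i
          simp only [Pi.add_apply] at h4
          have h3 : u i = x i - w i := by rw [← h4]; ring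
          rw [h3, h2, sub_zero]; exact hxi
      · right; exact him
      · by_cases hi1 : i ∈ pivotSet U₁
        · left; exact hi1
        · exfalso
          have hiU₂ : i ∈ pivotSet U₂ :=
            (mem_pivotSet_iff U₂ i).mpr ⟨x, hC2 hxC, hx0, hxi⟩
          exact absurd (hmax i ⟨hiU₂, hi1⟩) (not_le_of_gt him)
    · intro i hi
      rcases hi with hi | hi
      · exact pivotSet_mono hC1 hi
      · rw [Set.mem_singleton_iff] at hi
        subst hi
        exact (mem_pivotSet_iff C i).mpr ⟨v, hvC, hv0, hvm⟩
  refine ⟨C, ⟨hC1, hC2, hCpiv⟩, ?_⟩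
  rintro W' ⟨hW1, hW2, hWpiv⟩
  -- first: W' = U₁ ⊔ (W' ⊓ V_m)
  have hkey : U₁ ⊔ (W' ⊓ lowCoordsZero k n m) = W' := by
    apply pivot_sandwich (sup_le hW1 inf_le_left)
    intro i hi
    rw [hWpiv] at hi
    rcases hi with hi | hi
    · exact pivotSet_mono le_sup_left hi
    · rw [Set.mem_singleton_iff] at hi
      subst hi
      have hmW : i ∈ pivotSet W' := by rw [hWpiv]; exact Or.inr rfl
      obtain ⟨w, hwW, hw0, hwi⟩ := (mem_pivotSet_iff W' i).mp hmW
      exact (mem_pivotSet_iff _ i).mpr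
        ⟨w, Submodule.mem_sup_right (Submodule.mem_inf.mpr ⟨hwW, hw0⟩), hw0, hwi⟩
  have hW'C : W' ≤ C := by
    rw [← hkey]
    exact sup_le hC1 (le_trans (inf_le_inf_right _ hW2) le_sup_right)
  exact pivot_sandwich hW'C (by rw [hCpiv, hWpiv])
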